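/- The sum Σ_{d=1}^{∞} f_q(d)/d, with f_q(d) = μ(d)²·[gcd(d,2q)=1]·Π_{p|d} 1/(p−2), converges and equals q / ((2,q)·φ(q)·C₂·H(q)), where C₂ = Π_{p>2}(1 − 1/(p−1)²), H(q) = Π_{p|q, p>2}(p−1)/(p−2), and (2,q) = gcd(2,q). -/

import Mathlib

noncomputable def Hfun (k : ℕ) : ℝ :=
  ∏ p ∈ k.primeFactors.filter (fun p => 2 < p), ((p : ℝ) - 1) / ((p : ℝ) - 2)

noncomputable def fq (q d : ℕ) : ℝ :=
  if Squarefree d ∧ Nat.gcd d (2 * q) = 1 then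
    ∏ p ∈ d.primeFactors, 1 / ((p : ℝ) - 2) else 0

noncomputable def C2 : ℝ :=
  ∏' p : {p : ℕ // p.Prime ∧ 2 < p}, (1 - 1 / ((p.1 : ℝ) - 1) ^ 2)


lemma fq_zero (q : ℕ) : fq q 0 = 0 := by
  simp [fq, not_squarefree_zero]

lemma fq_one (q : ℕ) : fq q 1 = 1 := by
  simp [fq, squarefree_one]

lemma odd_three_le {q d p : ℕ} (hco : Nat.gcd d (2 * q) = 1) (hp : p ∈ d.primeFactors) :
    3 ≤ p := by
  have hpp := Nat.prime_of_mem_primeFactors hp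
  have hpd := Nat.dvd_of_mem_primeFactors hp
  have h2 : p ≠ 2 := by
    rintro rfl
    have : (2:ℕ) ∣ Nat.gcd d (2*q) := Nat.dvd_gcd hpd ⟨q, rfl⟩
    omega
  have := hpp.two_le
  rcases Nat.lt_or_ge p 3 with h | h
  · omega
  · exact h

lemma fq_nonneg (q d : ℕ) : 0 ≤ fq q d := by
  unfold fq
  split
  · rename_i h
    refine Finset.prod_nonneg fun p hp => ?_
    have h3 : (3:ℝ) ≤ p := by exact_mod_cast odd_three_le h.2 hp
    have : (0:ℝ) < (p:ℝ) - 2 := by linarith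
    positivity
  · exact le_refl 0

lemma fq_mul (q : ℕ) {m n : ℕ} (h : Nat.Coprime m n) :
    fq q (m * n) = fq q m * fq q n := by
  rcases eq_or_ne m 0 with rfl | hm
  · simp [fq_zero, fq, not_squarefree_zero]
  rcases eq_or_ne n 0 with rfl | hn
  · simp [fq_zero, fq, not_squarefree_zero]
  by_cases Hm : Squarefree m ∧ Nat.gcd m (2*q) = 1
  · by_cases Hn : Squarefree n ∧ Nat.gcd n (2*q) = 1
    · have Hmn : Squarefree (m*n) ∧ Nat.gcd (m*n) (2*q) = 1 :=
        ⟨(Nat.squarefree_mul h).mpr ⟨Hm.1, Hn.1⟩, Nat.Coprime.mul Hm.2 Hn.2⟩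
      unfold fq
      rw [if_pos Hmn, if_pos Hm, if_pos Hn, Nat.primeFactors_mul hm hn,
        Finset.prod_union (Nat.Coprime.disjoint_primeFactors h)]
    · have Hmn : ¬(Squarefree (m*n) ∧ Nat.gcd (m*n) (2*q) = 1) := by
        rintro ⟨hsq, hco⟩
        exact Hn ⟨hsq.squarefree_of_dvd (dvd_mul_left n m),
          Nat.Coprime.coprime_dvd_left (dvd_mul_left n m) hco⟩
      unfold fq
      rw [if_neg Hmn, if_neg Hn, mul_zero]
  · have Hmn : ¬(Squarefree (m*n) ∧ Nat.gcd (m*n) (2*q) = 1) := by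
      rintro ⟨hsq, hco⟩
      exact Hm ⟨hsq.squarefree_of_dvd (dvd_mul_right m n),
        Nat.Coprime.coprime_dvd_left (dvd_mul_right m n) hco⟩
    unfold fq
    rw [if_neg Hmn, if_neg Hm, zero_mul]

lemma sqrt_prod (s : Finset ℕ) : Real.sqrt (∏ p ∈ s, (p:ℝ)) = ∏ p ∈ s, Real.sqrt p := by
  induction s using Finset.cons_induction with
  | empty => simp
  | cons a s ha ih =>
    rw [Finset.prod_cons, Finset.prod_cons, Real.sqrt_mul (by positivity), ih]

lemma sqrt_le_three_mul_prod {d : ℕ} (q : ℕ) (hd : d ≠ 0) (hsq : Squarefree d)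
    (hco : Nat.gcd d (2 * q) = 1) :
    Real.sqrt d ≤ 3 * ∏ p ∈ d.primeFactors, ((p:ℝ) - 2) := by
  have hprod : (d:ℝ) = ∏ p ∈ d.primeFactors, (p:ℝ) := by
    conv_lhs => rw [← Nat.prod_primeFactors_of_squarefree hsq]
    push_cast; ring
  rw [hprod, sqrt_prod]
  set s := d.primeFactors with hs
  have hge : ∀ p ∈ s, 3 ≤ p := fun p hp => odd_three_le hco hp
  have key : ∀ p ∈ s, p ≠ 3 → Real.sqrt p ≤ (p:ℝ) - 2 := by
    intro p hp hp3
    have h4 : 4 ≤ p := by have := hge p hp; omega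
    have h4' : (4:ℝ) ≤ p := by exact_mod_cast h4
    have : (p:ℝ) ≤ ((p:ℝ) - 2)^2 := by nlinarith
    calc Real.sqrt p ≤ Real.sqrt (((p:ℝ)-2)^2) := Real.sqrt_le_sqrt this
      _ = (p:ℝ) - 2 := Real.sqrt_sq (by linarith)
  have hnn : ∀ p ∈ s, (0:ℝ) ≤ (p:ℝ) - 2 := by
    intro p hp; have := hge p hp
    have : (3:ℝ) ≤ p := by exact_mod_cast this
    linarith
  by_cases h3 : 3 ∈ s
  · rw [← Finset.mul_prod_erase s _ h3, ← Finset.mul_prod_erase s _ h3]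
    have h1 : ∏ p ∈ s.erase 3, Real.sqrt p ≤ ∏ p ∈ s.erase 3, ((p:ℝ) - 2) :=
      Finset.prod_le_prod (fun p _ => Real.sqrt_nonneg _)
        (fun p hp => key p (Finset.mem_of_mem_erase hp) (Finset.ne_of_mem_erase hp))
    have h2 : Real.sqrt 3 ≤ 3 := by
      calc Real.sqrt 3 ≤ Real.sqrt (3^2) := Real.sqrt_le_sqrt (by norm_num)
        _ = 3 := Real.sqrt_sq (by norm_num)
    have h3' : ((3:ℕ):ℝ) - 2 = 1 := by norm_num
    rw [h3']
    push_cast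
    calc Real.sqrt 3 * ∏ p ∈ s.erase 3, Real.sqrt p
        ≤ 3 * ∏ p ∈ s.erase 3, ((p:ℝ) - 2) := by
          apply mul_le_mul h2 h1 (Finset.prod_nonneg fun p _ => Real.sqrt_nonneg _) (by norm_num)
      _ = 3 * (1 * ∏ p ∈ s.erase 3, ((p:ℝ) - 2)) := by ring
  · have h1 : ∏ p ∈ s, Real.sqrt p ≤ ∏ p ∈ s, ((p:ℝ) - 2) :=
      Finset.prod_le_prod (fun p _ => Real.sqrt_nonneg _)
        (fun p hp => key p hp (fun h => h3 (h ▸ hp)))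
    have h2 : (0:ℝ) ≤ ∏ p ∈ s, ((p:ℝ) - 2) := Finset.prod_nonneg hnn
    linarith

lemma fq_le (q d : ℕ) : fq q d ≤ 3 / Real.sqrt d := by
  rcases eq_or_ne d 0 with rfl | hd
  · simp [fq_zero]
  unfold fq
  split
  · rename_i h
    obtain ⟨hsq, hco⟩ := h
    have hP : (0:ℝ) < ∏ p ∈ d.primeFactors, ((p:ℝ) - 2) := by
      apply Finset.prod_pos
      intro p hp
      have : (3:ℝ) ≤ p := by exact_mod_cast odd_three_le hco hp
      linarith
    have hsd : (0:ℝ) < Real.sqrt d := Real.sqrt_pos.mpr (by positivity)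
    rw [Finset.prod_div_distrib, Finset.prod_const_one]
    rw [div_le_div_iff₀ hP hsd]
    calc 1 * Real.sqrt d = Real.sqrt d := one_mul _
      _ ≤ 3 * ∏ p ∈ d.primeFactors, ((p:ℝ) - 2) := sqrt_le_three_mul_prod q hd hsq hco
  · exact div_nonneg (by norm_num) (Real.sqrt_nonneg _)

lemma summable_F (q : ℕ) : Summable (fun d : ℕ => fq q d / d) := by
  have hsum : Summable (fun d : ℕ => 3 * (1 / (d:ℝ) ^ (3/2 : ℝ))) :=
    (Real.summable_one_div_nat_rpow.mpr (by norm_num)).mul_left 3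
  refine Summable.of_nonneg_of_le (fun d => div_nonneg (fq_nonneg q d) (Nat.cast_nonneg d)) (fun d => ?_) hsum
  rcases eq_or_ne d 0 with rfl | hd
  · simp [fq_zero]
  have hd0 : (0:ℝ) < d := by exact_mod_cast Nat.pos_of_ne_zero hd
  have hsd : (0:ℝ) < Real.sqrt d := Real.sqrt_pos.mpr hd0
  have hr : (d:ℝ) ^ (3/2 : ℝ) = d * Real.sqrt d := by
    rw [show (3/2:ℝ) = 1 + 1/2 by norm_num, Real.rpow_add hd0, Real.rpow_one,
      Real.sqrt_eq_rpow]
  rw [hr]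
  calc fq q d / d ≤ (3 / Real.sqrt d) / d := by gcongr; exact fq_le q d
    _ = 3 * (1 / ((d:ℝ) * Real.sqrt d)) := by field_simp

lemma fq_two (q : ℕ) : fq q 2 = 0 := by
  unfold fq
  rw [if_neg]
  rintro ⟨-, h⟩
  rw [Nat.gcd_eq_left ⟨q, rfl⟩] at h
  omega

lemma tsum_pow (q : ℕ) {p : ℕ} (hp : p.Prime) :
    ∑' e : ℕ, fq q (p^e) / ((p^e : ℕ) : ℝ) = 1 + fq q p / p := by
  rw [tsum_eq_sum (s := {0, 1}) ?h]
  · rw [Finset.sum_pair (by norm_num : (0:ℕ) ≠ 1)]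
    simp [fq_one]
  · intro b hb
    have hb2 : 2 ≤ b := by
      simp only [Finset.mem_insert, Finset.mem_singleton] at hb
      omega
    have : ¬ Squarefree (p ^ b) := by
      intro h
      exact hp.not_isUnit (h p (by rw [← sq]; exact pow_dvd_pow p hb2))
    rw [show fq q (p^b) = 0 by unfold fq; rw [if_neg (by tauto)], zero_div]

noncomputable def gfun (q : ℕ) (p : ℕ) : ℝ :=
  if p ∣ q then 1 else 1 + 1/((p:ℝ)*((p:ℝ)-2))

lemma hasProd_G (q : ℕ) :
    HasProd (fun p : {p : ℕ // p.Prime ∧ 2 < p} => gfun q p.1) (∑' d : ℕ, fq q d / d) := by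
  have hsum : Summable (fun d : ℕ => ‖fq q d / d‖) :=
    (summable_F q).congr fun d =>
      (Real.norm_of_nonneg (div_nonneg (fq_nonneg q d) (Nat.cast_nonneg d))).symm
  have h1 := EulerProduct.eulerProduct_hasProd (f := fun d : ℕ => fq q d / d)
    (by simp [fq_one])
    (fun {m n} h => by
      rw [fq_mul q h, Nat.cast_mul, div_mul_div_comm])
    hsum (by simp [fq_zero])
  set F1 : ℕ → ℝ := fun p => 1 + fq q p / p with hF1
  rw [show (fun p : Nat.Primes => ∑' e : ℕ, fq q (p.1^e) / ((p.1^e : ℕ):ℝ)) = fun p : Nat.Primes => F1 p.1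
    from funext fun p => tsum_pow q p.2] at h1
  change HasProd (F1 ∘ Subtype.val) _ at h1
  replace h1 := (hasProd_subtype_iff_mulIndicator (s := {p : ℕ | Nat.Prime p}) (f := F1)).mp h1
  have hset : Set.mulIndicator {p : ℕ | Nat.Prime p} F1 =
      Set.mulIndicator {p : ℕ | p.Prime ∧ 2 < p} F1 := by
    funext p
    by_cases hpp : p.Prime
    · by_cases h2 : 2 < p
      · rw [Set.mulIndicator_of_mem (by exact hpp) F1,
          Set.mulIndicator_of_mem (by exact ⟨hpp, h2⟩) F1]
      · have hp2 : p = 2 := by have := hpp.two_le; omega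
        subst hp2
        rw [Set.mulIndicator_of_mem (by exact hpp) F1,
          Set.mulIndicator_of_notMem (by simp) F1]
        simp [hF1, fq_two]
    · rw [Set.mulIndicator_of_notMem (by exact hpp) F1,
        Set.mulIndicator_of_notMem (by simp [hpp]) F1]
  rw [hset, ← hasProd_subtype_iff_mulIndicator] at h1
  have hpt : ∀ p : ℕ, p.Prime → 2 < p → F1 p = gfun q p := by
    intro p hpp h2
    by_cases hdvd : p ∣ q
    · rw [gfun, if_pos hdvd]
      have hfq : fq q p = 0 := by
        unfold fq
        rw [if_neg]
        rintro ⟨-, h⟩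
        have : p ∣ 1 := h ▸ Nat.dvd_gcd dvd_rfl (hdvd.mul_left 2)
        exact hpp.ne_one (Nat.dvd_one.mp this)
      simp [hF1, hfq]
    · rw [gfun, if_neg hdvd]
      have hfq : fq q p = 1/((p:ℝ)-2) := by
        unfold fq
        rw [if_pos, Nat.Prime.primeFactors hpp, Finset.prod_singleton]
        refine ⟨hpp.squarefree, (Nat.Prime.coprime_iff_not_dvd hpp).mpr ?_⟩
        intro h
        rcases (Nat.Prime.dvd_mul hpp).mp h with h' | h'
        · have := (Nat.prime_dvd_prime_iff_eq hpp Nat.prime_two).mp h'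
          omega
        · exact hdvd h'
      rw [hF1]
      simp only [hfq]
      rw [div_div, one_div, one_div, mul_comm ((p:ℝ)-2) (p:ℝ)]
  have : (fun p : {p : ℕ // p.Prime ∧ 2 < p} => gfun q p.1) = (F1 ∘ Subtype.val) :=
    funext fun p => (hpt p.1 p.2.1 p.2.2).symm
  rw [this]
  exact h1


lemma multipliable_of_le_one {ι : Type*} {f : ι → ℝ} (h0 : ∀ i, 0 ≤ f i)
    (h1 : ∀ i, f i ≤ 1) : Multipliable f := by
  classical
  refine ⟨⨅ s : Finset ι, ∏ i ∈ s, f i, ?_⟩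
  apply tendsto_atTop_ciInf
  · intro s t hst
    calc ∏ i ∈ t, f i = (∏ i ∈ t \ s, f i) * ∏ i ∈ s, f i := (Finset.prod_sdiff hst).symm
      _ ≤ 1 * ∏ i ∈ s, f i := by
          apply mul_le_mul_of_nonneg_right _ (Finset.prod_nonneg fun i _ => h0 i)
          exact Finset.prod_le_one (fun i _ => h0 i) (fun i _ => h1 i)
      _ = ∏ i ∈ s, f i := one_mul _
  · exact ⟨0, by rintro x ⟨s, rfl⟩; exact Finset.prod_nonneg fun i _ => h0 i⟩

lemma p_facts {p : ℕ} (hp : p.Prime ∧ 2 < p) : (3:ℝ) ≤ (p:ℝ) := by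
  have : 3 ≤ p := hp.2
  exact_mod_cast this

lemma multipliable_c : Multipliable (fun p : {p : ℕ // p.Prime ∧ 2 < p} =>
    (1 - 1 / ((p.1 : ℝ) - 1) ^ 2)) := by
  apply multipliable_of_le_one
  · intro p
    have h3 := p_facts p.2
    have h1 : (2:ℝ) ≤ (p.1:ℝ) - 1 := by linarith
    have h2 : (1:ℝ) ≤ ((p.1:ℝ) - 1)^2 := by nlinarith
    have : 1 / ((p.1:ℝ) - 1)^2 ≤ 1 := by
      rw [div_le_one (by nlinarith)]; linarith
    linarith
  · intro p
    have h3 := p_facts p.2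
    have : (0:ℝ) < ((p.1:ℝ) - 1)^2 := by nlinarith
    have : 0 ≤ 1 / ((p.1:ℝ) - 1)^2 := by positivity
    linarith

lemma key (q : ℕ) (hq : 0 < q) :
    C2 * (∑' d : ℕ, fq q d / d) =
      ∏ p ∈ q.primeFactors.filter (fun p => 2 < p), (1 - 1 / ((p:ℝ) - 1) ^ 2) := by
  have hG := hasProd_G q
  rw [C2, ← hG.tprod_eq, ← multipliable_c.tprod_mul hG.multipliable]
  have hpt : (fun p : {p : ℕ // p.Prime ∧ 2 < p} =>
      (1 - 1 / ((p.1 : ℝ) - 1) ^ 2) * gfun q p.1) =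
      fun p : {p : ℕ // p.Prime ∧ 2 < p} =>
        (fun n : ℕ => if n ∣ q then 1 - 1 / ((n:ℝ) - 1) ^ 2 else 1) p.1 := by
    funext p
    have h3 := p_facts p.2
    by_cases hdvd : p.1 ∣ q
    · simp only [gfun, if_pos hdvd, mul_one]
    · simp only [gfun, if_neg hdvd]
      have h0 : (p.1:ℝ) ≠ 0 := by linarith
      have h1 : (p.1:ℝ) - 1 ≠ 0 := by linarith
      have h2 : (p.1:ℝ) - 2 ≠ 0 := by linarith
      field_simp
      ring
  have hsub : ∏' (p : {p : ℕ // p.Prime ∧ 2 < p}),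
      (fun n : ℕ => if n ∣ q then 1 - 1 / ((n:ℝ) - 1) ^ 2 else 1) p.1 =
      ∏' n : ℕ, Set.mulIndicator {p : ℕ | p.Prime ∧ 2 < p}
        (fun n : ℕ => if n ∣ q then 1 - 1 / ((n:ℝ) - 1) ^ 2 else 1) n :=
    by
      exact tprod_subtype {p : ℕ | p.Prime ∧ 2 < p}
        (fun n : ℕ => if n ∣ q then 1 - 1 / ((n:ℝ) - 1) ^ 2 else 1)
  rw [hpt, hsub]
  rw [tprod_eq_prod (s := q.primeFactors.filter (fun p => 2 < p)) ?hout]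
  case hout =>
    intro b hb
    by_cases hbs : b ∈ {p : ℕ | p.Prime ∧ 2 < p}
    · rw [Set.mulIndicator_of_mem hbs]
      rw [if_neg]
      intro hbq
      exact hb (Finset.mem_filter.mpr ⟨Nat.mem_primeFactors.mpr ⟨hbs.1, hbq, hq.ne'⟩, hbs.2⟩)
    · exact Set.mulIndicator_of_notMem hbs _
  refine Finset.prod_congr rfl fun p hp => ?_
  rw [Finset.mem_filter] at hp
  have hmem : p ∈ {p : ℕ | p.Prime ∧ 2 < p} :=
    ⟨Nat.prime_of_mem_primeFactors hp.1, hp.2⟩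
  rw [Set.mulIndicator_of_mem hmem, if_pos (Nat.dvd_of_mem_primeFactors hp.1)]

lemma C2_ne_zero : C2 ≠ 0 := by
  have h := key 1 one_pos
  intro h0
  rw [h0, zero_mul] at h
  simp [Nat.primeFactors_one] at h


lemma three_le_of_filter {q p : ℕ} (hp : p ∈ q.primeFactors.filter (fun p => 2 < p)) :
    (3:ℝ) ≤ (p:ℝ) := by
  rw [Finset.mem_filter] at hp
  have : 3 ≤ p := hp.2
  exact_mod_cast this

lemma Hfun_pos (q : ℕ) : 0 < Hfun q := by
  apply Finset.prod_pos
  intro p hp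
  have := three_le_of_filter hp
  apply div_pos <;> linarith

lemma main_id (q : ℕ) (hq : 0 < q) :
    (Nat.gcd 2 q : ℝ) * (Nat.totient q : ℝ) * Hfun q *
      ∏ p ∈ q.primeFactors.filter (fun p => 2 < p), (1 - 1 / ((p:ℝ) - 1) ^ 2) = q := by
  have hcast : ((∏ p ∈ q.primeFactors, (p-1) : ℕ) : ℝ) = ∏ p ∈ q.primeFactors, ((p:ℝ)-1) := by
    rw [Nat.cast_prod]
    refine Finset.prod_congr rfl fun p hp => ?_
    have h2 : 2 ≤ p := (Nat.prime_of_mem_primeFactors hp).two_le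
    have h1 : 1 ≤ p := by omega
    push_cast [Nat.cast_sub h1]
    ring
  have hφ : (Nat.totient q : ℝ) * ∏ p ∈ q.primeFactors, (p:ℝ) =
      q * ∏ p ∈ q.primeFactors, ((p:ℝ)-1) := by
    have := congrArg (Nat.cast : ℕ → ℝ) (Nat.totient_mul_prod_primeFactors q)
    rw [Nat.cast_mul, Nat.cast_mul, Nat.cast_prod, hcast] at this
    exact this
  have hsplit1 := Finset.prod_filter_mul_prod_filter_not q.primeFactors
    (fun p => 2 < p) (fun p => (p:ℝ))
  have hsplit2 := Finset.prod_filter_mul_prod_filter_not q.primeFactors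
    (fun p => 2 < p) (fun p => ((p:ℝ)-1))
  have hHP : Hfun q * ∏ p ∈ q.primeFactors.filter (fun p => 2 < p), (1 - 1 / ((p:ℝ) - 1) ^ 2)
      = (∏ p ∈ q.primeFactors.filter (fun p => 2 < p), (p:ℝ)) /
        (∏ p ∈ q.primeFactors.filter (fun p => 2 < p), ((p:ℝ)-1)) := by
    rw [Hfun, ← Finset.prod_mul_distrib, ← Finset.prod_div_distrib]
    refine Finset.prod_congr rfl fun p hp => ?_
    have h3 := three_le_of_filter hp
    have h1 : (p:ℝ) - 1 ≠ 0 := by linarith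
    have h2 : (p:ℝ) - 2 ≠ 0 := by linarith
    field_simp
    ring
  have hP23 : (0:ℝ) < ∏ p ∈ q.primeFactors.filter (fun p => 2 < p), ((p:ℝ)-1) := by
    apply Finset.prod_pos
    intro p hp
    have := three_le_of_filter hp
    linarith
  rw [mul_assoc, hHP, ← mul_div_assoc, div_eq_iff hP23.ne']
  by_cases h2 : 2 ∣ q
  · have hF2 : q.primeFactors.filter (fun p => ¬ 2 < p) = {2} := by
      ext p
      simp only [Finset.mem_filter, Finset.mem_singleton]
      constructor
      · rintro ⟨hp, hle⟩
        have := (Nat.prime_of_mem_primeFactors hp).two_le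
        omega
      · rintro rfl
        exact ⟨Nat.mem_primeFactors.mpr ⟨Nat.prime_two, h2, hq.ne'⟩, by omega⟩
    rw [hF2] at hsplit1 hsplit2
    rw [Finset.prod_singleton] at hsplit1 hsplit2
    have hg : (Nat.gcd 2 q : ℝ) = 2 := by rw [Nat.gcd_eq_left h2]; norm_num
    rw [hg]
    push_cast at hsplit1 hsplit2
    linear_combination (Nat.totient q : ℝ) * hsplit1 + hφ - (q:ℝ) * hsplit2
  · have hF2 : q.primeFactors.filter (fun p => ¬ 2 < p) = ∅ := by
      ext p
      simp only [Finset.mem_filter, Finset.notMem_empty, iff_false, not_and]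
      intro hp hle
      have h2le := (Nat.prime_of_mem_primeFactors hp).two_le
      have : p = 2 := by omega
      subst this
      exact h2 (Nat.dvd_of_mem_primeFactors hp)
    rw [hF2, Finset.prod_empty, mul_one] at hsplit1 hsplit2
    have hg : (Nat.gcd 2 q : ℝ) = 1 := by
      rw [(Nat.Prime.coprime_iff_not_dvd Nat.prime_two).mpr h2]
      norm_num
    rw [hg]
    linear_combination (Nat.totient q : ℝ) * hsplit1 + hφ - (q:ℝ) * hsplit2

theorem stmt12 : ∀ q : ℕ, 0 < q →
    Summable (fun d : ℕ => fq q d / d) ∧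
    ∑' d : ℕ, fq q d / d =
      q / ((Nat.gcd 2 q : ℝ) * (Nat.totient q : ℝ) * C2 * Hfun q) := by
  intro q hq
  refine ⟨summable_F q, ?_⟩
  have hkey := key q hq
  have hC2 := C2_ne_zero
  have hgne : (Nat.gcd 2 q : ℝ) ≠ 0 := by
    have : 0 < Nat.gcd 2 q := Nat.gcd_pos_of_pos_right 2 hq
    positivity
  have hφne : (Nat.totient q : ℝ) ≠ 0 := by
    have : 0 < Nat.totient q := Nat.totient_pos.mpr hq
    positivity
  have hHne : Hfun q ≠ 0 := (Hfun_pos q).ne'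
  have hT : ∑' d : ℕ, fq q d / d =
      (∏ p ∈ q.primeFactors.filter (fun p => 2 < p), (1 - 1 / ((p:ℝ) - 1) ^ 2)) / C2 := by
    rw [eq_div_iff hC2, mul_comm]
    exact hkey
  rw [hT]
  rw [← main_id q hq]
  rw [div_eq_div_iff hC2 (by
    apply mul_ne_zero (mul_ne_zero (mul_ne_zero hgne hφne) hC2) hHne)]
  ring
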